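/- For all α ∈ [0,1] and all positive semidefinite matrices Σ₁, Σ₂, setting χ = αΣ₁ + (1−α)Σ₂, one has Fᵀ R̃(χ)⁻¹ F ⪯ Fᵀ R̃(αΣ₁)⁻¹ F + Fᵀ R̃((1−α)Σ₂)⁻¹ F. -/

import Mathlib

open Matrix BigOperators

noncomputable section

/-- `R̃(Σ) = C (A Σ Aᵀ + Q) Cᵀ + R`. -/
def Rt {ny nz : ℕ} (A Q : Matrix (Fin ny) (Fin ny) ℝ)
    (C : Matrix (Fin nz) (Fin ny) ℝ) (R : Matrix (Fin nz) (Fin nz) ℝ)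
    (S : Matrix (Fin ny) (Fin ny) ℝ) : Matrix (Fin nz) (Fin nz) ℝ :=
  C * (A * S * Aᵀ + Q) * Cᵀ + R

/-- Optimal unknown-input filter gain `M(Σ)`. -/
def Mg {ny nz nd : ℕ} (A Q : Matrix (Fin ny) (Fin ny) ℝ) (G : Matrix (Fin ny) (Fin nd) ℝ)
    (C : Matrix (Fin nz) (Fin ny) ℝ) (R : Matrix (Fin nz) (Fin nz) ℝ)
    (S : Matrix (Fin ny) (Fin ny) ℝ) : Matrix (Fin nd) (Fin nz) ℝ :=
  ((C * G)ᵀ * (Rt A Q C R S)⁻¹ * (C * G))⁻¹ * (C * G)ᵀ * (Rt A Q C R S)⁻¹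

/-- Optimal state filter gain `K(Σ)`. -/
def Kg {ny nz : ℕ} (A Q : Matrix (Fin ny) (Fin ny) ℝ)
    (C : Matrix (Fin nz) (Fin ny) ℝ) (R : Matrix (Fin nz) (Fin nz) ℝ)
    (S : Matrix (Fin ny) (Fin ny) ℝ) : Matrix (Fin ny) (Fin nz) ℝ :=
  (A * S * Aᵀ + Q) * Cᵀ * (Rt A Q C R S)⁻¹

/-- Closed loop matrix `Ã(Σ)`. -/
def Atil {ny nz nd : ℕ} (A Q : Matrix (Fin ny) (Fin ny) ℝ) (G : Matrix (Fin ny) (Fin nd) ℝ)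
    (C : Matrix (Fin nz) (Fin ny) ℝ) (R : Matrix (Fin nz) (Fin nz) ℝ)
    (S : Matrix (Fin ny) (Fin ny) ℝ) : Matrix (Fin ny) (Fin ny) ℝ :=
  (1 - Kg A Q C R S * C) * (1 - G * Mg A Q G C R S * C) * A

/-- `F̃(Σ)`. -/
def Ftil {ny nz nd : ℕ} (A Q : Matrix (Fin ny) (Fin ny) ℝ) (G : Matrix (Fin ny) (Fin nd) ℝ)
    (C : Matrix (Fin nz) (Fin ny) ℝ) (R : Matrix (Fin nz) (Fin nz) ℝ)
    (S : Matrix (Fin ny) (Fin ny) ℝ) : Matrix (Fin ny) (Fin ny) ℝ :=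
  -((1 - Kg A Q C R S * C) * (1 - G * Mg A Q G C R S * C))

/-- `W̃(Σ)`. -/
def Wtil {ny nz nd : ℕ} (A Q : Matrix (Fin ny) (Fin ny) ℝ) (G : Matrix (Fin ny) (Fin nd) ℝ)
    (C : Matrix (Fin nz) (Fin ny) ℝ) (R : Matrix (Fin nz) (Fin nz) ℝ)
    (S : Matrix (Fin ny) (Fin ny) ℝ) : Matrix (Fin ny) (Fin nz) ℝ :=
  G * Mg A Q G C R S - Kg A Q C R S * C * G * Mg A Q G C R S + Kg A Q C R S

/-- The state error covariance update map `ρ(Σ)`. -/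
def rho {ny nz nd : ℕ} (A Q : Matrix (Fin ny) (Fin ny) ℝ) (G : Matrix (Fin ny) (Fin nd) ℝ)
    (C : Matrix (Fin nz) (Fin ny) ℝ) (R : Matrix (Fin nz) (Fin nz) ℝ)
    (S : Matrix (Fin ny) (Fin ny) ℝ) : Matrix (Fin ny) (Fin ny) ℝ :=
  Atil A Q G C R S * S * (Atil A Q G C R S)ᵀ
    + Ftil A Q G C R S * Q * (Ftil A Q G C R S)ᵀ
    + Wtil A Q G C R S * R * (Wtil A Q G C R S)ᵀ

/-- The unknown-input error covariance update map `ρᵈ(Σ)`. -/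
def rhod {ny nz nd : ℕ} (A Q : Matrix (Fin ny) (Fin ny) ℝ) (G : Matrix (Fin ny) (Fin nd) ℝ)
    (C : Matrix (Fin nz) (Fin ny) ℝ) (R : Matrix (Fin nz) (Fin nz) ℝ)
    (S : Matrix (Fin ny) (Fin ny) ℝ) : Matrix (Fin nd) (Fin nd) ℝ :=
  ((C * G)ᵀ * (Rt A Q C R S)⁻¹ * (C * G))⁻¹


lemma psd_smul {m : Type*} [Fintype m] {S : Matrix m m ℝ} (hS : S.PosSemidef) {c : ℝ} (hc : 0 ≤ c) :
    (c • S).PosSemidef := by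
  refine posSemidef_iff_dotProduct_mulVec.mpr ⟨?_, fun x => ?_⟩
  · unfold Matrix.IsHermitian at *
    rw [conjTranspose_smul, hS.1]
    simp
  · rw [smul_mulVec, dotProduct_smul, smul_eq_mul]
    exact mul_nonneg hc (hS.dotProduct_mulVec_nonneg x)

lemma inv_antitone {m : Type*} [Fintype m] [DecidableEq m] {A B : Matrix m m ℝ}
    (hA : A.PosDef) (hB : B.PosDef) (h : (B - A).PosSemidef) :
    (A⁻¹ - B⁻¹).PosSemidef := by
  haveI := hA.isUnit.invertible
  haveI := hB.isUnit.invertible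
  have hone : (1 : Matrix m m ℝ)ᴴ = 1 := by simp
  have key : (fromBlocks B (1 : Matrix m m ℝ) (1 : Matrix m m ℝ)ᴴ A⁻¹).PosSemidef := by
    rw [Matrix.PosDef.fromBlocks₂₂ _ _ hA.inv]
    have e : B - 1 * (A⁻¹)⁻¹ * (1 : Matrix m m ℝ)ᴴ = B - A := by
      rw [hone, Matrix.inv_inv_of_invertible]
      simp [Matrix.one_mul, Matrix.mul_one]
    rw [e]; exact h
  have := (Matrix.PosDef.fromBlocks₁₁ (1 : Matrix m m ℝ) A⁻¹ hB).mp key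
  simpa using this

lemma sandwich {p q : ℕ} {M : Matrix (Fin p) (Fin p) ℝ} (hM : M.PosSemidef)
    (B : Matrix (Fin p) (Fin q) ℝ) : (Bᵀ * M * B).PosSemidef := by
  rw [← Matrix.conjTranspose_eq_transpose_of_trivial]
  exact hM.conjTranspose_mul_mul_same B

lemma sandwich' {p q : ℕ} {M : Matrix (Fin p) (Fin p) ℝ} (hM : M.PosSemidef)
    (B : Matrix (Fin q) (Fin p) ℝ) : (B * M * Bᵀ).PosSemidef := by
  rw [← Matrix.conjTranspose_eq_transpose_of_trivial]
  exact hM.mul_mul_conjTranspose_same B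

lemma Rt_posDef {ny nz : ℕ} (A Q : Matrix (Fin ny) (Fin ny) ℝ)
    (C : Matrix (Fin nz) (Fin ny) ℝ) (R : Matrix (Fin nz) (Fin nz) ℝ)
    (hQ : Q.PosDef) (hR : R.PosDef) {S : Matrix (Fin ny) (Fin ny) ℝ}
    (hS : S.PosSemidef) : (Rt A Q C R S).PosDef := by
  refine Matrix.PosDef.posSemidef_add (sandwich' ?_ C) hR
  exact (sandwich' hS A).add hQ.posSemidef

/-- for `α ∈ [0,1]`, PSD `Σ₁, Σ₂` and `χ = αΣ₁ + (1−α)Σ₂`,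
`Fᵀ R̃(χ)⁻¹ F ⪯ Fᵀ R̃(αΣ₁)⁻¹ F + Fᵀ R̃((1−α)Σ₂)⁻¹ F` where `F = C·G`. -/
theorem info_matrix_split_bound {ny nz nd : ℕ}
    (A Q : Matrix (Fin ny) (Fin ny) ℝ) (G : Matrix (Fin ny) (Fin nd) ℝ)
    (C : Matrix (Fin nz) (Fin ny) ℝ) (R : Matrix (Fin nz) (Fin nz) ℝ)
    (hQ : Q.PosDef) (hR : R.PosDef)
    (α : ℝ) (hα0 : 0 ≤ α) (hα1 : α ≤ 1)
    (S1 S2 : Matrix (Fin ny) (Fin ny) ℝ)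
    (h1 : S1.PosSemidef) (h2 : S2.PosSemidef) :
    ((C * G)ᵀ * (Rt A Q C R (α • S1))⁻¹ * (C * G)
      + (C * G)ᵀ * (Rt A Q C R ((1 - α) • S2))⁻¹ * (C * G)
      - (C * G)ᵀ * (Rt A Q C R (α • S1 + (1 - α) • S2))⁻¹ * (C * G)).PosSemidef := by
  have hs1 := psd_smul h1 hα0
  have hs2 := psd_smul h2 (by linarith : (0:ℝ) ≤ 1 - α)
  set F := C * G
  set R1 := Rt A Q C R (α • S1) with hR1
  set R2 := Rt A Q C R ((1 - α) • S2) with hR2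
  set Rχ := Rt A Q C R (α • S1 + (1 - α) • S2) with hRχ
  have hd1 : R1.PosDef := Rt_posDef A Q C R hQ hR hs1
  have hd2 : R2.PosDef := Rt_posDef A Q C R hQ hR hs2
  have hdχ : Rχ.PosDef := Rt_posDef A Q C R hQ hR (hs1.add hs2)
  have hdiff : (Rχ - R1).PosSemidef := by
    have e : Rχ - R1 = C * (A * ((1 - α) • S2) * Aᵀ) * Cᵀ := by
      rw [hRχ, hR1]
      simp only [Rt, Matrix.mul_add, Matrix.add_mul]
      abel
    rw [e]
    exact sandwich' (sandwich' hs2 A) C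
  have hmono := inv_antitone hd1 hdχ hdiff
  have e2 : Fᵀ * R1⁻¹ * F + Fᵀ * R2⁻¹ * F - Fᵀ * Rχ⁻¹ * F
      = Fᵀ * (R1⁻¹ - Rχ⁻¹) * F + Fᵀ * R2⁻¹ * F := by
    simp only [Matrix.mul_sub, Matrix.sub_mul]
    abel
  rw [e2]
  exact (sandwich hmono F).add (sandwich hd2.inv.posSemidef F)
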